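/- Let A be a real symmetric n×n matrix such that the quadratic form x^T A x is co-positive (nonnegative on R_+^n) and vanishes at some nonzero u in R_+^n. Let I = {i : u_i > 0}. Then the principal submatrix A(I,I) is singular, i.e., det A(I,I) = 0. -/

import Mathlib

open Matrix

/-- If a co-positive symmetric matrix A vanishes (as a quadratic form) at a
nonzero nonnegative u, then the principal submatrix indexed by I = {i : uᵢ > 0}
is singular. -/
theorem stmt15 (n : ℕ) (A : Matrix (Fin n) (Fin n) ℝ) (hsym : A.IsSymm)
    (hcop : ∀ x : Fin n → ℝ, (∀ i, 0 ≤ x i) → 0 ≤ x ⬝ᵥ A.mulVec x)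
    (u : Fin n → ℝ) (hu : ∀ i, 0 ≤ u i) (hu0 : u ≠ 0)
    (huA : u ⬝ᵥ A.mulVec u = 0) :
    (A.submatrix (fun i : {i : Fin n // 0 < u i} => (i : Fin n))
      (fun i : {i : Fin n // 0 < u i} => (i : Fin n))).det = 0 := by
  have hvm : u ᵥ* A = A *ᵥ u := by
    conv_lhs => rw [← hsym.eq]
    exact vecMul_transpose A u
  -- Step 1: the gradient vanishes at positive coordinates
  have key : ∀ i : Fin n, 0 < u i → A.mulVec u i = 0 := by
    intro i hi
    set c := A.mulVec u i with hc
    have quad : ∀ t : ℝ, -u i ≤ t → 0 ≤ 2 * t * c + t ^ 2 * A i i := by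
      intro t ht
      have hx : ∀ j : Fin n, 0 ≤ ((u + Pi.single i t : Fin n → ℝ)) j := by
        intro j
        rcases eq_or_ne j i with rfl | hj
        · simpa using by linarith
        · simpa [Pi.single_eq_of_ne hj] using hu j
      have h0 := hcop (u + Pi.single i t) hx
      have expand : (u + Pi.single i t) ⬝ᵥ A.mulVec (u + Pi.single i t)
          = u ⬝ᵥ A.mulVec u + 2 * t * c + t ^ 2 * A i i := by
        rw [mulVec_add, dotProduct_add, add_dotProduct, add_dotProduct]
        have h2 : u ⬝ᵥ A.mulVec (Pi.single i t) = t * c := by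
          rw [dotProduct_mulVec, hvm, dotProduct_single]
          ring
        have h3 : Pi.single i t ⬝ᵥ A.mulVec u = t * c := by
          rw [single_dotProduct]
        have h4 : Pi.single i t ⬝ᵥ A.mulVec (Pi.single i t) = t ^ 2 * A i i := by
          rw [single_dotProduct, mulVec_single]
          simp [Matrix.col]
          ring
        rw [h2, h3, h4]; ring
      rw [expand, huA] at h0
      linarith
    -- choose a small perturbation in the direction of -c
    by_contra hcne
    set ε : ℝ := min (1 / (1 + |A i i|)) (u i / (1 + |c|)) with hε
    have hA1 : (0:ℝ) < 1 + |A i i| := by positivity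
    have hc1 : (0:ℝ) < 1 + |c| := by positivity
    have hεpos : 0 < ε := lt_min (by positivity) (by positivity)
    have hεA : ε * |A i i| < 2 := by
      have h1 : ε ≤ 1 / (1 + |A i i|) := min_le_left _ _
      have : ε * (1 + |A i i|) ≤ 1 := by
        rw [← le_div_iff₀ hA1] at *; exact h1
      nlinarith [abs_nonneg (A i i), hεpos.le]
    have hεc : ε * |c| ≤ u i := by
      have h1 : ε ≤ u i / (1 + |c|) := min_le_right _ _
      have : ε * (1 + |c|) ≤ u i := by
        rw [← le_div_iff₀ hc1]; exact h1
      nlinarith [abs_nonneg c, hεpos.le]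
    have ht : -u i ≤ -(c * ε) := by
      have : |c * ε| ≤ u i := by
        rw [abs_mul, abs_of_pos hεpos]
        calc |c| * ε = ε * |c| := by ring
        _ ≤ u i := hεc
      have := le_abs_self (c * ε)
      linarith
    have hq := quad (-(c * ε)) ht
    have hc2 : 0 < c ^ 2 := by positivity
    have habs : (c * ε) ^ 2 * A i i ≤ (c * ε) ^ 2 * |A i i| := by
      nlinarith [le_abs_self (A i i), sq_nonneg (c * ε)]
    nlinarith [sq_nonneg c, mul_pos hc2 hεpos, hεpos,
      mul_le_mul_of_nonneg_left hεA.le (sq_nonneg c)]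
  -- Step 2: the restricted vector is a nonzero kernel vector
  rw [← Matrix.exists_mulVec_eq_zero_iff]
  obtain ⟨i, hi⟩ := Function.ne_iff.mp hu0
  have hipos : 0 < u i := lt_of_le_of_ne (hu i) (Ne.symm hi)
  refine ⟨fun j => u j, ?_, ?_⟩
  · intro h
    have := congrFun h ⟨i, hipos⟩
    simpa using hi this
  · funext j
    have hsum : ∑ k : {k : Fin n // 0 < u k}, A (j : Fin n) (k : Fin n) * u (k : Fin n)
        = ∑ k : Fin n, A (j : Fin n) k * u k := by
      rw [← Fintype.sum_subtype_add_sum_subtype (fun k => 0 < u k)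
        (fun k => A (j : Fin n) k * u k)]
      have : ∑ k : {k : Fin n // ¬ 0 < u k}, A (j : Fin n) (k : Fin n) * u (k : Fin n) = 0 := by
        apply Finset.sum_eq_zero
        intro k _
        have : u (k : Fin n) = 0 := le_antisymm (not_lt.mp k.2) (hu _)
        simp [this]
      rw [this, add_zero]
    simp only [mulVec, dotProduct, submatrix_apply, Pi.zero_apply]
    rw [hsum]
    simpa [mulVec, dotProduct] using key _ j.2
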